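/- For the general ferromagnetic XY model with nonnegative coupling constants J (Hamiltonian H_J(θ) = −∑_m J_m cos(mθ)), all correlation functions of the form ⟨cos(mθ)⟩_{V,J} are nonnegative. -/

import Mathlib

open MeasureTheory Real

/-- The Hamiltonian of the general XY model on a finite vertex set `V`:
`H_J(θ) = −∑_m J_m cos(∑_x m_x θ_x)`, the sum being over finitely supported
integer-valued functions `m : V → ℤ`. -/
noncomputable def genXYHam {V : Type*} [Fintype V] (J : (V → ℤ) → ℝ) (θ : V → ℝ) : ℝ :=
  -∑ᶠ m : V → ℤ, J m * Real.cos (∑ x, (m x : ℝ) * θ x)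

/-- The a priori measure: product of uniform measures on `(−π, π]`. -/
noncomputable def aprioriXY (V : Type*) [Fintype V] : Measure (V → ℝ) :=
  Measure.pi fun _ : V => volume.restrict (Set.Ioc (-π) π)

/-- The Gibbs expectation `⟨f⟩_{V,J}` of the general XY model (density `e^{−H_J}`
with respect to the a priori product uniform measure on `(−π,π]^V`). -/
noncomputable def genXYExp {V : Type*} [Fintype V] (J : (V → ℤ) → ℝ)
    (f : (V → ℝ) → ℝ) : ℝ :=
  (∫ θ, f θ * Real.exp (-genXYHam J θ) ∂(aprioriXY V)) /
    (∫ θ, Real.exp (-genXYHam J θ) ∂(aprioriXY V))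

open Nat

namespace GinibreAux

def R : Type := ℝ
instance : MeasurableSpace R := inferInstanceAs (MeasurableSpace ℝ)
noncomputable instance : MeasureSpace R :=
  ⟨(volume : Measure ℝ).restrict (Set.Ioc (-π) π)⟩
instance : SigmaFinite (volume : Measure R) :=
  inferInstanceAs (SigmaFinite ((volume : Measure ℝ).restrict (Set.Ioc (-π) π)))

def unR : R → ℝ := fun t => t

instance : IsFiniteMeasure (volume : Measure R) := by
  constructor
  show (volume : Measure ℝ).restrict (Set.Ioc (-π) π) Set.univ < ⊤
  rw [Measure.restrict_apply_univ]
  exact lt_of_le_of_lt (le_of_eq Real.volume_Ioc) ENNReal.ofReal_lt_top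

/-- single coordinate integral -/
lemma single_int (n : ℤ) :
    ∫ t : R, Complex.exp ((n : ℝ) * unR t * Complex.I) =
      ((if n = 0 then 2 * π else 0 : ℝ) : ℂ) := by
  have h1 : (∫ t : R, Complex.exp ((n : ℝ) * unR t * Complex.I)) =
      ∫ t in Set.Ioc (-π) π, Complex.exp ((n : ℝ) * t * Complex.I) := rfl
  rw [h1, ← intervalIntegral.integral_of_le (by linarith [Real.pi_pos] : -π ≤ π)]
  by_cases hn : n = 0
  · subst hn
    simp [intervalIntegral.integral_const, two_mul]
  · have hc : ((n : ℂ) * Complex.I) ≠ 0 := by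
      simp [Complex.I_ne_zero, hn]
    have : ∀ t : ℝ, (((n : ℝ) : ℂ) * t * Complex.I) = ((n : ℂ) * Complex.I) * t := by
      intro t; push_cast; ring
    simp only [this]
    rw [integral_exp_mul_complex hc]
    have key : Complex.exp ((n : ℂ) * Complex.I * π) =
        Complex.exp ((n : ℂ) * Complex.I * (-π)) := by
      have : (n : ℂ) * Complex.I * π = (n : ℂ) * Complex.I * (-π) + n * (2 * π * Complex.I) := by
        ring
      rw [this, Complex.exp_add, Complex.exp_int_mul_two_pi_mul_I, mul_one]
    rw [key]
    simp [hn]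

end GinibreAux

namespace GinibreAux

@[fun_prop] lemma measurable_unR : Measurable unR := measurable_id

lemma integral_cos_nonneg {V : Type*} [Fintype V] (w : V → ℤ) :
    0 ≤ ∫ θ, Real.cos (∑ x, (w x : ℝ) * θ x) ∂(aprioriXY V) := by
  show 0 ≤ ∫ θ : V → R, Real.cos (∑ x, (w x : ℝ) * unR (θ x)) ∂(volume)
  have hre : ∀ θ : V → R, Real.cos (∑ x, (w x : ℝ) * unR (θ x)) =
      (∏ x, Complex.exp ((w x : ℝ) * unR (θ x) * Complex.I)).re := by
    intro θ
    have : ∀ x : V, ((w x : ℝ) * unR (θ x) : ℂ) * Complex.I =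
        (((w x : ℝ) * unR (θ x) : ℝ) : ℂ) * Complex.I := by intro x; push_cast; ring
    rw [← Complex.exp_sum]
    rw [show (∑ x, ((w x : ℝ) * unR (θ x) : ℂ) * Complex.I) =
        (((∑ x, (w x : ℝ) * unR (θ x) : ℝ)) : ℂ) * Complex.I by push_cast; rw [Finset.sum_mul]]
    exact (Complex.exp_ofReal_mul_I_re _).symm
  simp only [hre]
  have hmeas : Measurable fun θ : V → R =>
      ∏ x, Complex.exp ((w x : ℝ) * unR (θ x) * Complex.I) := by
    apply Finset.measurable_prod
    intro x _
    exact Complex.measurable_exp.comp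
      ((((Complex.measurable_ofReal.comp ((measurable_pi_apply x : Measurable
        fun θ : V → R => θ x))).const_mul _).mul_const _))
  have hint : Integrable (fun θ : V → R =>
      ∏ x, Complex.exp ((w x : ℝ) * unR (θ x) * Complex.I)) volume := by
    refine ⟨hmeas.aestronglyMeasurable, HasFiniteIntegral.of_bounded (C := 1) ?_⟩
    filter_upwards with θ
    rw [norm_prod]
    apply Finset.prod_le_one
    · intro x _; positivity
    · intro x _
      show ‖_‖ ≤ 1
      rw [show ((w x : ℝ) * unR (θ x) : ℂ) * Complex.I =
        (((w x : ℝ) * unR (θ x) : ℝ) : ℂ) * Complex.I by push_cast; ring]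
      rw [Complex.norm_exp_ofReal_mul_I]
  have h2 := integral_re (𝕜 := ℂ) hint
  simp only [RCLike.re_to_complex] at h2
  rw [h2]
  rw [show (fun θ : V → R => ∏ x, Complex.exp ((w x : ℝ) * unR (θ x) * Complex.I)) =
      fun θ : V → R => ∏ x, (fun t => Complex.exp ((w x : ℝ) * unR t * Complex.I)) (θ x) from rfl]
  rw [MeasureTheory.integral_fintype_prod_volume_eq_prod
      (f := fun x (t : R) => Complex.exp ((w x : ℝ) * unR t * Complex.I))]
  simp only [single_int]
  rw [← Complex.ofReal_prod, Complex.ofReal_re]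
  apply Finset.prod_nonneg
  intro x _
  split
  · positivity
  · exact le_refl 0

end GinibreAux

namespace GinibreAux

instance fin1 : IsFiniteMeasure ((volume : Measure ℝ).restrict (Set.Ioc (-π) π)) := by
  constructor
  rw [Measure.restrict_apply_univ]
  exact lt_of_le_of_lt (le_of_eq Real.volume_Ioc) ENNReal.ofReal_lt_top

instance finApriori {V : Type*} [Fintype V] : IsFiniteMeasure (aprioriXY V) := by
  unfold aprioriXY; infer_instance

variable {V : Type*} [Fintype V]

/-- minus the Hamiltonian, as a finite sum -/
noncomputable def F (J : (V → ℤ) → ℝ) (s : Finset (V → ℤ)) (θ : V → ℝ) : ℝ :=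
  ∑ k ∈ s, J k * Real.cos (∑ x, (k x : ℝ) * θ x)

lemma cont_cos (w : V → ℤ) :
    Continuous fun θ : V → ℝ => Real.cos (∑ x, (w x : ℝ) * θ x) := by fun_prop

lemma cont_F (J : (V → ℤ) → ℝ) (s : Finset (V → ℤ)) : Continuous (F J s) := by
  unfold F; fun_prop

lemma abs_F_le (J : (V → ℤ) → ℝ) (hJ : ∀ m, 0 ≤ J m) (s : Finset (V → ℤ)) (θ : V → ℝ) :
    |F J s θ| ≤ ∑ k ∈ s, J k := by
  refine (Finset.abs_sum_le_sum_abs _ _).trans ?_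
  apply Finset.sum_le_sum
  intro k _
  rw [abs_mul, abs_of_nonneg (hJ k)]
  have := Real.abs_cos_le_one (∑ x, (k x : ℝ) * θ x)
  nlinarith [hJ k]

lemma integrable_of_cont_bdd {g : (V → ℝ) → ℝ} (hg : Continuous g) {C : ℝ}
    (hb : ∀ θ, |g θ| ≤ C) : Integrable g (aprioriXY V) :=
  ⟨hg.aestronglyMeasurable, HasFiniteIntegral.of_bounded (C := C)
    (Filter.Eventually.of_forall fun θ => by simpa [Real.norm_eq_abs] using hb θ)⟩

lemma int_cosF (J : (V → ℤ) → ℝ) (hJ : ∀ m, 0 ≤ J m) (s : Finset (V → ℤ))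
    (w : V → ℤ) (n : ℕ) :
    Integrable (fun θ => Real.cos (∑ x, (w x : ℝ) * θ x) * (F J s θ) ^ n)
      (aprioriXY V) := by
  refine integrable_of_cont_bdd (by have := cont_F J s; fun_prop)
    (C := (∑ k ∈ s, J k) ^ n) (fun θ => ?_)
  rw [abs_mul, abs_pow]
  have h1 := Real.abs_cos_le_one (∑ x, (w x : ℝ) * θ x)
  have h2 : |F J s θ| ^ n ≤ (∑ k ∈ s, J k) ^ n :=
    pow_le_pow_left₀ (abs_nonneg _) (abs_F_le J hJ s θ) n
  nlinarith [pow_nonneg (abs_nonneg (F J s θ)) n]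

lemma key (J : (V → ℤ) → ℝ) (hJ : ∀ m, 0 ≤ J m) (s : Finset (V → ℤ)) (n : ℕ) :
    ∀ w : V → ℤ,
      0 ≤ ∫ θ, Real.cos (∑ x, (w x : ℝ) * θ x) * (F J s θ) ^ n ∂(aprioriXY V) := by
  induction n with
  | zero => intro w; simpa using integral_cos_nonneg w
  | succ n ih =>
    intro w
    have hsplit : ∀ θ : V → ℝ,
        Real.cos (∑ x, (w x : ℝ) * θ x) * F J s θ ^ (n + 1) =
        ∑ k ∈ s, (J k / 2) *
          (Real.cos (∑ x, ((w + k) x : ℝ) * θ x) * F J s θ ^ n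
           + Real.cos (∑ x, ((w - k) x : ℝ) * θ x) * F J s θ ^ n) := by
      intro θ
      have e1 : ∀ k : V → ℤ, (∑ x, ((w + k) x : ℝ) * θ x) =
          (∑ x, (w x : ℝ) * θ x) + (∑ x, (k x : ℝ) * θ x) := by
        intro k
        rw [← Finset.sum_add_distrib]
        apply Finset.sum_congr rfl
        intro x _
        push_cast [Pi.add_apply]
        ring
      have e2 : ∀ k : V → ℤ, (∑ x, ((w - k) x : ℝ) * θ x) =
          (∑ x, (w x : ℝ) * θ x) - (∑ x, (k x : ℝ) * θ x) := by
        intro k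
        rw [← Finset.sum_sub_distrib]
        apply Finset.sum_congr rfl
        intro x _
        push_cast [Pi.sub_apply]
        ring
      rw [pow_succ,
        show Real.cos (∑ x, (w x : ℝ) * θ x) * (F J s θ ^ n * F J s θ) =
          (Real.cos (∑ x, (w x : ℝ) * θ x) * F J s θ) * F J s θ ^ n by ring]
      conv_lhs => rw [F]
      rw [Finset.mul_sum, Finset.sum_mul]
      apply Finset.sum_congr rfl
      intro k _
      rw [e1 k, e2 k, Real.cos_add, Real.cos_sub, F]
      ring
    have hI : ∀ k ∈ s, Integrable (fun θ => (J k / 2) *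
        (Real.cos (∑ x, ((w + k) x : ℝ) * θ x) * F J s θ ^ n
         + Real.cos (∑ x, ((w - k) x : ℝ) * θ x) * F J s θ ^ n)) (aprioriXY V) :=
      fun k _ => (((int_cosF J hJ s (w + k) n).add (int_cosF J hJ s (w - k) n)).const_mul _)
    calc (0:ℝ) ≤ ∑ k ∈ s, ∫ θ, (J k / 2) *
          (Real.cos (∑ x, ((w + k) x : ℝ) * θ x) * F J s θ ^ n
           + Real.cos (∑ x, ((w - k) x : ℝ) * θ x) * F J s θ ^ n) ∂(aprioriXY V) := by
            apply Finset.sum_nonneg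
            intro k hk
            rw [MeasureTheory.integral_const_mul,
              integral_add (int_cosF J hJ s (w + k) n) (int_cosF J hJ s (w - k) n)]
            have := ih (w + k)
            have := ih (w - k)
            have := hJ k
            positivity
      _ = ∫ θ, Real.cos (∑ x, (w x : ℝ) * θ x) * F J s θ ^ (n + 1) ∂(aprioriXY V) := by
            rw [← integral_finset_sum s hI]
            exact integral_congr_ae (Filter.Eventually.of_forall fun θ => (hsplit θ).symm)

end GinibreAux

/-- first Ginibre inequality: for the general ferromagnetic XY model
with nonnegative, finitely supported couplings `J`, all correlation functions
`⟨cos(mθ)⟩_{V,J}` are nonnegative. -/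

theorem ginibre_nonneg {V : Type*} [Fintype V]
    (J : (V → ℤ) → ℝ) (hJ : ∀ m, 0 ≤ J m)
    (hs : (Function.support J).Finite) (m : V → ℤ) :
    0 ≤ genXYExp J (fun θ => Real.cos (∑ x, (m x : ℝ) * θ x)) := by
  classical
  set s : Finset (V → ℤ) := hs.toFinset with hsdef
  have hH : ∀ θ : V → ℝ, -genXYHam J θ = GinibreAux.F J s θ := by
    intro θ
    unfold genXYHam GinibreAux.F
    rw [neg_neg]
    apply finsum_eq_sum_of_support_subset
    intro k hk
    have hk' : J k ≠ 0 := by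
      intro h
      apply hk
      simp [Function.mem_support, h]
    simpa [hsdef] using hs.mem_toFinset.mpr hk'
  have hC0 : 0 ≤ ∑ k ∈ s, J k := Finset.sum_nonneg fun k _ => hJ k
  set C := ∑ k ∈ s, J k with hCdef
  have hexp : ∀ x : ℝ, HasSum (fun n : ℕ => x ^ n / (n ! : ℝ)) (Real.exp x) := by
    intro x
    rw [Real.exp_eq_exp_ℝ]
    exact NormedSpace.expSeries_div_hasSum_exp x
  have hNum : 0 ≤ ∫ θ, Real.cos (∑ x, (m x : ℝ) * θ x) *
      Real.exp (GinibreAux.F J s θ) ∂(aprioriXY V) := by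
    have hgN : ∀ N : ℕ, 0 ≤ ∫ θ, Real.cos (∑ x, (m x : ℝ) * θ x) *
        ∑ n ∈ Finset.range N, GinibreAux.F J s θ ^ n / n ! ∂(aprioriXY V) := by
      intro N
      have heq : (fun θ : V → ℝ => Real.cos (∑ x, (m x : ℝ) * θ x) *
          ∑ n ∈ Finset.range N, GinibreAux.F J s θ ^ n / n !) =
          fun θ => ∑ n ∈ Finset.range N,
            (Real.cos (∑ x, (m x : ℝ) * θ x) * GinibreAux.F J s θ ^ n) / n ! := by
        funext θ
        rw [Finset.mul_sum]
        apply Finset.sum_congr rfl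
        intros
        ring
      rw [heq, integral_finset_sum _
        (fun n _ => (GinibreAux.int_cosF J hJ s m n).div_const _)]
      apply Finset.sum_nonneg
      intro n _
      rw [integral_div]
      exact div_nonneg (GinibreAux.key J hJ s n m) (by positivity)
    have hlim : Filter.Tendsto (fun N : ℕ => ∫ θ, Real.cos (∑ x, (m x : ℝ) * θ x) *
        ∑ n ∈ Finset.range N, GinibreAux.F J s θ ^ n / (n ! : ℝ) ∂(aprioriXY V))
        Filter.atTop (nhds (∫ θ, Real.cos (∑ x, (m x : ℝ) * θ x) *
          Real.exp (GinibreAux.F J s θ) ∂(aprioriXY V))) := by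
      apply MeasureTheory.tendsto_integral_of_dominated_convergence
        (bound := fun _ => Real.exp C)
      · intro N
        apply Continuous.aestronglyMeasurable
        have := GinibreAux.cont_F J s
        fun_prop
      · exact integrable_const _
      · intro N
        filter_upwards with θ
        rw [Real.norm_eq_abs, abs_mul]
        have h1 : |Real.cos (∑ x, (m x : ℝ) * θ x)| ≤ 1 := Real.abs_cos_le_one _
        have h2 : |∑ n ∈ Finset.range N, GinibreAux.F J s θ ^ n / (n ! : ℝ)| ≤ Real.exp C := by
          refine (Finset.abs_sum_le_sum_abs _ _).trans ?_
          have heq2 : ∀ n ∈ Finset.range N,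
              |GinibreAux.F J s θ ^ n / (n ! : ℝ)| = |GinibreAux.F J s θ| ^ n / (n ! : ℝ) := by
            intro n _
            rw [abs_div, abs_pow, Nat.abs_cast]
          rw [Finset.sum_congr rfl heq2]
          calc ∑ n ∈ Finset.range N, |GinibreAux.F J s θ| ^ n / (n ! : ℝ)
              ≤ Real.exp |GinibreAux.F J s θ| :=
                Real.sum_le_exp_of_nonneg (abs_nonneg _) N
            _ ≤ Real.exp C := Real.exp_le_exp.2 (GinibreAux.abs_F_le J hJ s θ)
        nlinarith [abs_nonneg (∑ n ∈ Finset.range N, GinibreAux.F J s θ ^ n / (n ! : ℝ)),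
          Real.exp_pos C]
      · filter_upwards with θ
        exact ((hexp (GinibreAux.F J s θ)).tendsto_sum_nat).const_mul _
    exact ge_of_tendsto hlim (Filter.Eventually.of_forall hgN)
  have hDint : Integrable (fun θ => Real.exp (GinibreAux.F J s θ)) (aprioriXY V) := by
    refine GinibreAux.integrable_of_cont_bdd
      (Real.continuous_exp.comp (GinibreAux.cont_F J s)) (C := Real.exp C) fun θ => ?_
    rw [abs_of_pos (Real.exp_pos _)]
    exact Real.exp_le_exp.2 ((le_abs_self _).trans (GinibreAux.abs_F_le J hJ s θ))
  have hD : 0 < ∫ θ, Real.exp (GinibreAux.F J s θ) ∂(aprioriXY V) := by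
    rw [integral_pos_iff_support_of_nonneg (fun θ => (Real.exp_pos _).le) hDint]
    have hsup : Function.support (fun θ : V → ℝ => Real.exp (GinibreAux.F J s θ)) =
        Set.univ := Set.eq_univ_of_forall fun θ => Real.exp_ne_zero _
    rw [hsup]
    unfold aprioriXY
    rw [Measure.pi_univ]
    apply CanonicallyOrderedAdd.prod_pos.mpr
    intro x _
    rw [Measure.restrict_apply_univ, Real.volume_Ioc]
    apply ENNReal.ofReal_pos.2
    linarith [Real.pi_pos]
  unfold genXYExp
  simp only [hH]
  exact div_nonneg hNum hD.le
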